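/- Factorization of the Szegedy walk operator: let U = Σ_{i=0}^{N−1} e_i e_i† ⊗ U_i with each U_i an N×N unitary and U_i φ_i = e_b for all i for a fixed b ∈ {0,…,N−1}, and set D = I_N ⊗ (2 e_b e_b† − I_N). Then U_walk = S U† D U. -/
import Mathlib


open Matrix BigOperators

/-- The `i`-th column state of the transition matrix `P`: `(φ_i)_j = √(P_{j,i})`. -/
noncomputable def colState {N : ℕ} (P : Matrix (Fin N) (Fin N) ℝ) (i : Fin N) :
    Fin N → ℂ :=
  fun j => (Real.sqrt (P j i) : ℂ)

/-- The `i`-th projector state `ψ_i = e_i ⊗ φ_i ∈ ℂ^N ⊗ ℂ^N`. -/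
noncomputable def projState {N : ℕ} (P : Matrix (Fin N) (Fin N) ℝ) (i : Fin N) :
    Fin N × Fin N → ℂ :=
  fun p => (if p.1 = i then 1 else 0) * colState P i p.2

/-- The projection `Π = Σ_i ψ_i ψ_i†`, as a matrix on `ℂ^N ⊗ ℂ^N`. -/
noncomputable def szegedyProj {N : ℕ} (P : Matrix (Fin N) (Fin N) ℝ) :
    Matrix (Fin N × Fin N) (Fin N × Fin N) ℂ :=
  ∑ i : Fin N,
    Matrix.of (fun p q => projState P i p * (starRingEnd ℂ) (projState P i q))

/-- The swap operator `S` on `ℂ^N ⊗ ℂ^N`, determined by `S(u ⊗ v) = v ⊗ u`. -/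
def swapOp (N : ℕ) : Matrix (Fin N × Fin N) (Fin N × Fin N) ℂ :=
  Matrix.of (fun p q => if p.1 = q.2 ∧ p.2 = q.1 then 1 else 0)

/-- The block-diagonal operator `U = Σ_i e_i e_i† ⊗ U_i` on `ℂ^N ⊗ ℂ^N`. -/
def blockDiag {N : ℕ} (Ui : Fin N → Matrix (Fin N) (Fin N) ℂ) :
    Matrix (Fin N × Fin N) (Fin N × Fin N) ℂ :=
  Matrix.of (fun p q => if p.1 = q.1 then Ui p.1 p.2 q.2 else 0)

/-- The diagonal operator `D = I_N ⊗ (2 e_b e_b† − I_N)` on `ℂ^N ⊗ ℂ^N`. -/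
def diagD (N : ℕ) (b : Fin N) : Matrix (Fin N × Fin N) (Fin N × Fin N) ℂ :=
  Matrix.of (fun p q =>
    (if p.1 = q.1 then 1 else 0) *
      (2 * (if p.2 = b then 1 else 0) * (if q.2 = b then 1 else 0) -
        (if p.2 = q.2 then 1 else 0)))


/-- Auxiliary: the single-block rank-one reflection `2 e_b e_b† - I`. -/
def D0 {N : ℕ} (b : Fin N) : Matrix (Fin N) (Fin N) ℂ :=
  Matrix.of (fun p q =>
    2 * (if p = b then 1 else 0) * (if q = b then 1 else 0) - (if p = q then 1 else 0))

theorem blockDiag_conjT {N : ℕ} (A : Fin N → Matrix (Fin N) (Fin N) ℂ) :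
    (_root_.blockDiag A)ᴴ = _root_.blockDiag (fun i => (A i)ᴴ) := by
  ext ⟨p1, p2⟩ ⟨q1, q2⟩
  by_cases h : p1 = q1 <;>
    simp [_root_.blockDiag, Matrix.conjTranspose_apply, h, eq_comm]

theorem blockDiag_mul' {N : ℕ} (A B : Fin N → Matrix (Fin N) (Fin N) ℂ) :
    _root_.blockDiag A * _root_.blockDiag B = _root_.blockDiag (fun i => A i * B i) := by
  ext ⟨p1, p2⟩ ⟨q1, q2⟩
  simp only [_root_.blockDiag, Matrix.mul_apply, of_apply, Fintype.sum_prod_type, ite_mul,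
    mul_ite, zero_mul, mul_zero]
  by_cases h : p1 = q1 <;>
    simp [h, Finset.sum_ite_eq, Finset.sum_ite_eq', Matrix.mul_apply]

theorem diagD_eq_blockDiag {N : ℕ} (b : Fin N) :
    diagD N b = _root_.blockDiag (fun _ => D0 b) := by
  ext ⟨p1, p2⟩ ⟨q1, q2⟩
  by_cases h : p1 = q1 <;> simp [diagD, _root_.blockDiag, D0, h]

/-- Factorization of the Szegedy walk operator: if each `U_i` is unitary with
`U_i φ_i = e_b` for a fixed basis index `b`, then `U_walk = S U† D U`. -/
theorem szegedyWalk_factorization (N : ℕ) (hN : 1 ≤ N)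
    (P : Matrix (Fin N) (Fin N) ℝ)
    (hnonneg : ∀ j i, 0 ≤ P j i) (hcol : ∀ i, ∑ j, P j i = 1)
    (Ui : Fin N → Matrix (Fin N) (Fin N) ℂ)
    (hUi : ∀ i, Ui i ∈ Matrix.unitaryGroup (Fin N) ℂ)
    (b : Fin N)
    (hb : ∀ i, (Ui i).mulVec (colState P i) = Pi.single b 1) :
    swapOp N * ((2 : ℂ) • szegedyProj P - 1)
      = swapOp N * (blockDiag Ui)ᴴ * diagD N b * blockDiag Ui := by
  -- entrywise unitarity
  have h2 : ∀ i p q, ∑ s, star (Ui i s p) * Ui i s q = if p = q then (1:ℂ) else 0 := by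
    intro i p q
    have h := (hUi i).1
    rw [Matrix.star_eq_conjTranspose] at h
    have := congrFun (congrFun h p) q
    simpa [Matrix.mul_apply, Matrix.conjTranspose_apply, Matrix.one_apply] using this
  -- the column state is the conjugate of the b-th row of Ui
  have hconj : ∀ i j, star (Ui i b j) = colState P i j := by
    intro i j
    have h1 : (Ui i)ᴴ.mulVec ((Ui i).mulVec (colState P i)) = colState P i := by
      rw [Matrix.mulVec_mulVec, ← Matrix.star_eq_conjTranspose, (hUi i).1,
        Matrix.one_mulVec]
    rw [hb i] at h1
    have := congrFun h1 j
    simpa [Matrix.mulVec_single, Matrix.conjTranspose_apply] using this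
  have hstar : ∀ i j, star (colState P i j) = colState P i j := by
    intro i j; simp [colState]
  have hUb : ∀ i j, Ui i b j = colState P i j := by
    intro i j
    have := congrArg star (hconj i j)
    rwa [star_star, hstar] at this
  -- the per-block identity
  have hblock : ∀ i, (Ui i)ᴴ * (D0 b * Ui i)
      = Matrix.of (fun p q => 2 * colState P i p * colState P i q) - 1 := by
    intro i
    ext p q
    simp only [Matrix.mul_apply, Matrix.conjTranspose_apply, Matrix.of_apply, Matrix.sub_apply,
      Matrix.one_apply, D0]
    simp only [sub_mul, ite_mul, zero_mul, one_mul, mul_one, mul_zero,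
      Finset.sum_sub_distrib, Finset.sum_ite_eq, Finset.sum_ite_eq', Finset.mem_univ, if_true,
      mul_sub, mul_ite]
    rw [h2, hconj, hUb]
    ring
  -- the reflection 2Π - 1 is block diagonal with the same blocks
  have hProj : (2 : ℂ) • szegedyProj P - 1
      = _root_.blockDiag (fun i =>
          Matrix.of (fun p q => 2 * colState P i p * colState P i q) - 1) := by
    ext ⟨p1, p2⟩ ⟨q1, q2⟩
    simp only [szegedyProj, projState, _root_.blockDiag, Matrix.sub_apply, Matrix.smul_apply,
      Matrix.one_apply, Matrix.of_apply, Matrix.sum_apply, _root_.map_mul, smul_eq_mul]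
    by_cases h : p1 = q1 <;>
      simp [h, Prod.ext_iff, apply_ite, colState, Complex.conj_ofReal, Finset.sum_ite_eq, Finset.sum_ite_eq',
        mul_comm, mul_assoc, mul_left_comm] <;> tauto
  calc swapOp N * ((2 : ℂ) • szegedyProj P - 1)
      = swapOp N * ((blockDiag Ui)ᴴ * (diagD N b * blockDiag Ui)) := by
        rw [hProj, blockDiag_conjT, diagD_eq_blockDiag, blockDiag_mul', blockDiag_mul']
        congr 1
        exact congrArg _root_.blockDiag (funext fun i => (hblock i).symm)
    _ = swapOp N * (blockDiag Ui)ᴴ * diagD N b * blockDiag Ui := by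
        rw [Matrix.mul_assoc, Matrix.mul_assoc]
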